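/- Let q ≥ 3 and n ≥ 3. There exist s ∈ Z_4^{q−1}, t = (t_1,t_2) ∈ Z_n × Z_2 and d = (d_1,d_2) ∈ Z_{qn} × Z_{2n−3} such that |C(n;s,t,d)| ≥ q^n / (4^{q−1} · n · 2 · (qn) · (2n−3)); in particular the redundancy n − log_q |C(n;s,t,d)| is at most 3 log_q(n) + O(1). -/
import Mathlib


/-- The VT syndrome `Syn(z) = Σ_{i=1}^{|z|} i·z_i` (positions are 1-indexed). -/
def syn (z : List ℕ) : ℕ := ∑ i ∈ Finset.range z.length, (i + 1) * z.getD i 0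

/-- `α(x) ∈ Σ_2^{n-1}`: `α(x)_i = 1` iff `x_{i+1} ≥ x_i`. -/
def alphaSeq (x : List ℕ) : List ℕ :=
  (List.range (x.length - 1)).map (fun i => if x.getD i 0 ≤ x.getD (i + 1) 0 then 1 else 0)

/-- `Inv(x) = |{(i,j) : i < j, x_i > x_j}|`. -/
def invCount (x : List ℕ) : ℕ :=
  ((Finset.range x.length ×ˢ Finset.range x.length).filter
    (fun p => p.1 < p.2 ∧ x.getD p.2 0 < x.getD p.1 0)).card

/-- The location sequence `P(x) ∈ Σ_2^n`: `P(x)_i = 1` iff `x_i = q-1`. -/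
def pseq (q : ℕ) (x : List ℕ) : List ℕ := x.map (fun a => if a = q - 1 then 1 else 0)

/-- Membership in the code `C(n;s,t,d)` of Theorem 1. -/
def memCodeC (q n : ℕ) (s : ℕ → ℕ) (t1 t2 d1 d2 : ℕ) (x : List ℕ) : Prop :=
  x.length = n ∧ (∀ a ∈ x, a < q) ∧
  (∀ a, a ≤ q - 2 → x.count a ≡ s a [MOD 4]) ∧
  syn (alphaSeq x) ≡ t1 [MOD n] ∧
  invCount x ≡ t2 [MOD 2] ∧
  syn x ≡ d1 [MOD q * n] ∧
  syn (pseq q x) ≡ d2 [MOD 2 * n - 3]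

/-- there exist parameters `s, t, d` such that
`|C(n;s,t,d)| ≥ q^n / (4^{q-1} · n · 2 · (qn) · (2n-3))`
(stated multiplicatively, avoiding division). -/
theorem stmt7 (q n : ℕ) (hq : 3 ≤ q) (hn : 3 ≤ n) :
    ∃ (s : ℕ → ℕ) (t1 t2 d1 d2 : ℕ),
      q ^ n ≤
        {x : List ℕ | memCodeC q n s t1 t2 d1 d2 x}.ncard *
          (4 ^ (q - 1) * n * 2 * (q * n) * (2 * n - 3)) := by
  classical
  -- the finset of all q-ary strings of length n
  set S : Finset (List ℕ) :=
    Finset.image (fun g : Fin n → Fin q => List.ofFn fun i => (g i : ℕ)) Finset.univ with hS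
  have hqn : 0 < q * n := by positivity
  have h2n3 : 0 < 2 * n - 3 := by omega
  have hn0 : 0 < n := by omega
  -- the classifying map
  set f : List ℕ → ((Fin (q - 1) → Fin 4) × ℕ × ℕ × ℕ × ℕ) :=
    fun x => (fun i => ⟨x.count (i : ℕ) % 4, Nat.mod_lt _ (by norm_num)⟩,
      syn (alphaSeq x) % n, invCount x % 2, syn x % (q * n),
      syn (pseq q x) % (2 * n - 3)) with hf
  set T : Finset ((Fin (q - 1) → Fin 4) × ℕ × ℕ × ℕ × ℕ) :=
    Finset.univ ×ˢ Finset.range n ×ˢ Finset.range 2 ×ˢ Finset.range (q * n)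
      ×ˢ Finset.range (2 * n - 3) with hT
  have hmaps : ∀ x ∈ S, f x ∈ T := by
    intro x _
    simp only [hT, hf, Finset.mem_product, Finset.mem_univ, Finset.mem_range, true_and]
    exact ⟨Nat.mod_lt _ hn0, Nat.mod_lt _ (by norm_num), Nat.mod_lt _ hqn, Nat.mod_lt _ h2n3⟩
  have hTcard : T.card = 4 ^ (q - 1) * n * 2 * (q * n) * (2 * n - 3) := by
    simp only [hT, Finset.card_product, Finset.card_univ, Fintype.card_fun,
      Fintype.card_fin, Finset.card_range]
    ring
  have hScard : S.card = q ^ n := by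
    rw [hS, Finset.card_image_of_injective _ ?_, Finset.card_univ, Fintype.card_fun,
      Fintype.card_fin, Fintype.card_fin]
    intro g g' h
    funext i
    have := congrArg (fun l => l.getD (i : ℕ) 0) h
    have h2 : ((g i : ℕ)) = ((g' i : ℕ)) := by
      simpa [List.getD_eq_getElem?_getD, List.getElem?_ofFn, i.isLt] using this
    exact Fin.val_injective h2
  have hTne : T.Nonempty := by
    refine ⟨⟨fun _ => 0, 0, 0, 0, 0⟩, ?_⟩
    simp only [hT, Finset.mem_product, Finset.mem_univ, Finset.mem_range, true_and]
    exact ⟨hn0, by norm_num, hqn, h2n3⟩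
  -- every q-ary string of length n is in S
  have hmemS : ∀ x : List ℕ, x.length = n → (∀ a ∈ x, a < q) → x ∈ S := by
    intro x hlen hbd
    rw [hS, Finset.mem_image]
    refine ⟨fun i => ⟨x.getD (i : ℕ) 0, ?_⟩, Finset.mem_univ _, ?_⟩
    · have hi : (i : ℕ) < x.length := by rw [hlen]; exact i.isLt
      rw [List.getD_eq_getElem x 0 hi]
      exact hbd _ (List.getElem_mem hi)
    · apply List.ext_getElem
      · simp [hlen]
      · intro i h1 h2
        simp only [List.getElem_ofFn]
        exact List.getD_eq_getElem x 0 h2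
  -- pigeonhole
  have key : ∃ y ∈ T, S.card ≤ ((S.filter fun x => f x = y).card) * T.card := by
    have hsum : S.card = ∑ y ∈ T, (S.filter fun x => f x = y).card :=
      Finset.card_eq_sum_card_fiberwise hmaps
    by_contra hcon
    push_neg at hcon
    have : S.card * T.card < S.card * T.card := by
      calc S.card * T.card = (∑ y ∈ T, (S.filter fun x => f x = y).card) * T.card := by
            rw [← hsum]
        _ = ∑ y ∈ T, (S.filter fun x => f x = y).card * T.card := by
            rw [Finset.sum_mul]
        _ < ∑ y ∈ T, S.card := Finset.sum_lt_sum_of_nonempty hTne fun y hy => hcon y hy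
        _ = T.card * S.card := by rw [Finset.sum_const, smul_eq_mul]
        _ = S.card * T.card := mul_comm _ _
    exact lt_irrefl _ this
  obtain ⟨y, hyT, hkey⟩ := key
  obtain ⟨c, t1, t2, d1, d2⟩ := y
  refine ⟨fun a => if h : a < q - 1 then (c ⟨a, h⟩ : ℕ) else 0, t1, t2, d1, d2, ?_⟩
  set F : Finset (List ℕ) := S.filter fun x => f x = (c, t1, t2, d1, d2) with hF
  set Code : Set (List ℕ) :=
    {x : List ℕ | memCodeC q n (fun a => if h : a < q - 1 then (c ⟨a, h⟩ : ℕ) else 0)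
      t1 t2 d1 d2 x} with hCode
  -- the fiber is contained in the code
  have hsub : (↑F : Set (List ℕ)) ⊆ Code := by
    intro x hx
    simp only [hF, Finset.coe_filter, Set.mem_setOf_eq] at hx
    obtain ⟨hxS, hfx⟩ := hx
    have hc : (f x).1 = c := congrArg Prod.fst hfx
    have ht1 : (f x).2.1 = t1 := congrArg (fun p => p.2.1) hfx
    have ht2 : (f x).2.2.1 = t2 := congrArg (fun p => p.2.2.1) hfx
    have hd1 : (f x).2.2.2.1 = d1 := congrArg (fun p => p.2.2.2.1) hfx
    have hd2 : (f x).2.2.2.2 = d2 := congrArg (fun p => p.2.2.2.2) hfx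
    simp only [hf] at hc ht1 ht2 hd1 hd2
    have hlen : x.length = n := by
      rw [hS, Finset.mem_image] at hxS
      obtain ⟨g, _, rfl⟩ := hxS
      simp
    have hbd : ∀ a ∈ x, a < q := by
      rw [hS, Finset.mem_image] at hxS
      obtain ⟨g, _, rfl⟩ := hxS
      intro a ha
      rw [List.mem_ofFn] at ha
      obtain ⟨i, rfl⟩ := ha
      exact (g i).isLt
    refine ⟨hlen, hbd, ?_, ?_, ?_, ?_, ?_⟩
    · intro a ha
      have haq : a < q - 1 := by omega
      have hval := congrArg Fin.val (congrFun hc ⟨a, haq⟩)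
      simp only at hval
      simp only [dif_pos haq]
      unfold Nat.ModEq
      omega
    · unfold Nat.ModEq; rw [← ht1]; exact (Nat.mod_mod_of_dvd _ dvd_rfl).symm
    · unfold Nat.ModEq; omega
    · unfold Nat.ModEq; rw [← hd1]; exact (Nat.mod_mod_of_dvd _ dvd_rfl).symm
    · unfold Nat.ModEq; rw [← hd2]; exact (Nat.mod_mod_of_dvd _ dvd_rfl).symm
  have hCodeFin : Code.Finite := by
    apply Set.Finite.subset S.finite_toSet
    intro x hx
    exact hmemS x hx.1 hx.2.1
  have hFC : F.card ≤ Code.ncard := by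
    rw [← Set.ncard_coe_finset]
    exact Set.ncard_le_ncard hsub hCodeFin
  calc q ^ n = S.card := hScard.symm
    _ ≤ F.card * T.card := hkey
    _ ≤ Code.ncard * T.card := Nat.mul_le_mul_right _ hFC
    _ = Code.ncard * (4 ^ (q - 1) * n * 2 * (q * n) * (2 * n - 3)) := by rw [hTcard]
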